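/- Assume a_1 ≤ a_2 ≤ … ≤ a_m ≤ 0 < a_{m+1} ≤ … ≤ a_{n−1} for some 0 ≤ m < n−1. Let λ be a composition of d with λ_i = 0 for all m+1 ≤ i ≤ n−1 and λ_n < d, let j be an index with m+1 ≤ j ≤ n−1, let k ∈ {1,…,n−1}, and set η = λ + λ_n e_k − λ_n e_n (a composition of d with λ ≤ η). Then the element y^{d a_j}·m_{λ,η} = (x_k y^{−a_k})^{λ_n}·y^{−a·λ° − λ_n + d a_j} of K does not belong to A. -/

import Mathlib

open MvPolynomial Finset

noncomputable section

/-- `Kk p` is the fraction field of `ℂ[x_1,…,x_p, y]`, a polynomial ring in `p+1` variables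
(so the paper's `n` is `p+1`). -/
abbrev Kk (p : ℕ) := FractionRing (MvPolynomial (Fin (p+1)) ℂ)

variable {p : ℕ}

/-- the images `x_i` (for `i = 1, …, p`) in the fraction field -/
def xv (i : Fin p) : Kk p :=
  algebraMap (MvPolynomial (Fin (p+1)) ℂ) (Kk p) (X i.castSucc)

/-- the image of `y` in the fraction field -/
def yv : Kk p :=
  algebraMap (MvPolynomial (Fin (p+1)) ℂ) (Kk p) (X (Fin.last p))

/-- `a · λ° = ∑_{i=1}^{n-1} a_i λ_i` -/
def aDot (a : Fin p → ℤ) (lam : Fin (p+1) → ℕ) : ℤ :=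
  ∑ i : Fin p, a i * lam i.castSucc

/-- the monomial `m_{μ,λ} = (∏_{i<n} x_i^{λ_i - μ_i}) y^{-a·λ° - λ_n - μ_n}` -/
def mMono (a : Fin p → ℤ) (μ lam : Fin (p+1) → ℕ) : Kk p :=
  (∏ i : Fin p, xv i ^ (lam i.castSucc - μ i.castSucc)) *
    yv ^ (-(aDot a lam) - (lam (Fin.last p) : ℤ) - (μ (Fin.last p) : ℤ))

/-- the coordinate ring `A = ℂ[x_1 y^{-a_1}, …, x_{n-1} y^{-a_{n-1}}, y^{-1}]`, i.e. the
ℂ-subalgebra of `K` generated by the `x_i y^{-a_i}` and `y^{-1}`. -/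
def Asub (a : Fin p → ℤ) : Subalgebra ℂ (Kk p) :=
  Algebra.adjoin ℂ ((Set.range fun i : Fin p => xv i * yv ^ (-(a i) : ℤ)) ∪ {yv⁻¹})

open Pointwise

lemma yv_ne_zero : (yv : Kk p) ≠ 0 := by
  intro h
  exact MvPolynomial.X_ne_zero (Fin.last p)
    (IsFractionRing.injective (MvPolynomial (Fin (p+1)) ℂ) (Kk p)
      (by rw [map_zero]; exact h))

def wdeg (a : Fin p → ℤ) (σ : Fin (p+1) →₀ ℕ) : ℤ :=
  (σ (Fin.last p) : ℤ) + ∑ i : Fin p, a i * σ i.castSucc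

lemma wdeg_add (a : Fin p → ℤ) (σ τ : Fin (p+1) →₀ ℕ) :
    wdeg a (σ + τ) = wdeg a σ + wdeg a τ := by
  unfold wdeg
  simp only [Finsupp.add_apply]
  push_cast
  simp only [mul_add, Finset.sum_add_distrib]
  ring

lemma wdeg_single_single (a : Fin p → ℤ) (k : Fin p) (L E : ℕ) :
    wdeg a (Finsupp.single k.castSucc L + Finsupp.single (Fin.last p) E)
      = (E : ℤ) + a k * L := by
  classical
  unfold wdeg
  simp only [Finsupp.add_apply, Finsupp.single_apply, (Fin.castSucc_lt_last k).ne,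
    (Fin.castSucc_lt_last _).ne', Fin.castSucc_inj, if_false, if_true]
  push_cast
  have : ∀ i : Fin p, (a i * ((if k = i then (L:ℤ) else 0) + 0)) = (if k = i then a i * L else 0) := by
    intro i; split <;> ring
  rw [Finset.sum_congr rfl (fun i _ => this i), Finset.sum_ite_eq]
  simp

lemma wdeg_single_last (a : Fin p → ℤ) (E : ℕ) :
    wdeg a (Finsupp.single (Fin.last p) E) = (E : ℤ) := by
  classical
  unfold wdeg
  simp [Finsupp.single_apply, (Fin.castSucc_lt_last _).ne']

lemma algebraMap_monomial_last (N : ℕ) :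
    algebraMap (MvPolynomial (Fin (p+1)) ℂ) (Kk p)
      (monomial (Finsupp.single (Fin.last p) N) 1) = yv ^ N := by
  rw [← MvPolynomial.X_pow_eq_monomial, map_pow]; rfl

def goodA (a : Fin p → ℤ) : Subalgebra ℂ (Kk p) where
  carrier := {w | ∃ (N : ℕ) (f : MvPolynomial (Fin (p+1)) ℂ),
      yv ^ N * w = algebraMap _ _ f ∧ ∀ σ ∈ f.support, wdeg a σ ≤ N}
  mul_mem' := by
    rintro w₁ w₂ ⟨N₁, f₁, h₁, hs₁⟩ ⟨N₂, f₂, h₂, hs₂⟩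
    refine ⟨N₁ + N₂, f₁ * f₂, ?_, ?_⟩
    · rw [pow_add, map_mul, ← h₁, ← h₂]; ring
    · intro σ hσ
      classical
      obtain ⟨τ₁, ht₁, τ₂, ht₂, rfl⟩ := Finset.mem_add.mp (MvPolynomial.support_mul _ _ hσ)
      rw [wdeg_add]; push_cast; exact add_le_add (hs₁ _ ht₁) (hs₂ _ ht₂)
  add_mem' := by
    rintro w₁ w₂ ⟨N₁, f₁, h₁, hs₁⟩ ⟨N₂, f₂, h₂, hs₂⟩
    classical
    refine ⟨N₁ + N₂, monomial (Finsupp.single (Fin.last p) N₂) 1 * f₁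
        + monomial (Finsupp.single (Fin.last p) N₁) 1 * f₂, ?_, ?_⟩
    · rw [RingHom.map_add, RingHom.map_mul, RingHom.map_mul, ← h₁, ← h₂,
        algebraMap_monomial_last, algebraMap_monomial_last, mul_add, pow_add]
      ring
    · intro σ hσ
      have key : ∀ (M N : ℕ) (f : MvPolynomial (Fin (p+1)) ℂ),
          (∀ τ ∈ f.support, wdeg a τ ≤ N) →
          σ ∈ (monomial (Finsupp.single (Fin.last p) M) (1:ℂ) * f).support →
          wdeg a σ ≤ (M + N : ℕ) := by
        intro M N f hf hσ
        obtain ⟨τ₁, ht₁, τ₂, ht₂, rfl⟩ := Finset.mem_add.mp (MvPolynomial.support_mul _ _ hσ)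
        rw [MvPolynomial.support_monomial, if_neg one_ne_zero, Finset.mem_singleton] at ht₁
        subst ht₁
        rw [wdeg_add, wdeg_single_last]
        push_cast
        have := hf _ ht₂
        omega
      rcases Finset.mem_union.mp (MvPolynomial.support_add hσ) with h | h
      · exact key N₂ N₁ f₁ hs₁ h |>.trans (by push_cast; omega)
      · exact key N₁ N₂ f₂ hs₂ h |>.trans (by push_cast; omega)
  algebraMap_mem' := by
    intro r
    refine ⟨0, C r, ?_, ?_⟩
    · rw [pow_zero, one_mul, IsScalarTower.algebraMap_apply ℂ (MvPolynomial (Fin (p+1)) ℂ) (Kk p)]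
      rfl
    · intro σ hσ
      classical
      rw [← MvPolynomial.monomial_zero', MvPolynomial.support_monomial] at hσ
      split at hσ
      · simp at hσ
      · rw [Finset.mem_singleton] at hσ
        subst hσ
        simp [wdeg]

lemma Asub_le_goodA (a : Fin p → ℤ) : Asub a ≤ goodA a := by
  classical
  apply Algebra.adjoin_le
  rintro w (⟨i, rfl⟩ | rfl)
  · refine ⟨(a i).toNat,
      monomial (Finsupp.single i.castSucc 1 + Finsupp.single (Fin.last p) ((-(a i)).toNat)) 1,
      ?_, ?_⟩
    · rw [show (monomial (Finsupp.single i.castSucc 1 + Finsupp.single (Fin.last p)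
            ((-(a i)).toNat)) (1:ℂ))
          = monomial (Finsupp.single i.castSucc 1) 1
            * monomial (Finsupp.single (Fin.last p) ((-(a i)).toNat)) 1 by
          rw [MvPolynomial.monomial_mul, one_mul],
        RingHom.map_mul, algebraMap_monomial_last]
      have hx : algebraMap (MvPolynomial (Fin (p+1)) ℂ) (Kk p)
          (monomial (Finsupp.single i.castSucc 1) 1) = xv i := by
        rw [← MvPolynomial.X_pow_eq_monomial, pow_one]; rfl
      simp only [hx]
      have hy := yv_ne_zero (p := p)
      rw [show ((yv : Kk p) ^ ((-(a i)).toNat)) = yv ^ (((-(a i)).toNat : ℤ)) from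
        (zpow_natCast _ _).symm,
        show ((yv : Kk p) ^ ((a i).toNat)) = yv ^ (((a i).toNat : ℤ)) from
        (zpow_natCast _ _).symm]
      rw [mul_comm (xv i), ← mul_assoc, ← zpow_add₀ hy, mul_comm]
      congr 2
      omega
    · intro σ hσ
      rw [MvPolynomial.support_monomial, if_neg one_ne_zero, Finset.mem_singleton] at hσ
      subst hσ
      rw [wdeg_single_single]
      push_cast
      omega
  · refine ⟨1, 1, ?_, ?_⟩
    · rw [pow_one, mul_inv_cancel₀ (yv_ne_zero (p := p)), map_one]
    · intro σ hσ
      rw [show (1 : MvPolynomial (Fin (p+1)) ℂ) = monomial 0 1 by simp,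
        MvPolynomial.support_monomial, if_neg one_ne_zero, Finset.mem_singleton] at hσ
      subst hσ
      simp [wdeg]

/-- Under the ordering assumption `a_1 ≤ ⋯ ≤ a_m ≤ 0 < a_{m+1} ≤ ⋯ ≤ a_{n-1}` with
`0 ≤ m < n-1`, for a composition `λ` of `d` with `λ_i = 0` for `m+1 ≤ i ≤ n-1` and `λ_n < d`,
an index `j` with `m+1 ≤ j ≤ n-1`, `k ∈ {1,…,n-1}` and `η = λ + λ_n e_k - λ_n e_n`, the
element `y^{d a_j} m_{λ,η} = (x_k y^{-a_k})^{λ_n} y^{-a·λ° - λ_n + d a_j}` does not lie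
in `A`. (Here the paper's `n` is `p+1`, and indices `1,…,n-1` correspond to `Fin p`.) -/
theorem ydaj_mMono_not_mem_Asub (p d m : ℕ) (hp : 1 ≤ p) (hd : 1 ≤ d) (hm : m < p)
    (a : Fin p → ℤ) (hsort : Monotone a)
    (hnonpos : ∀ i : Fin p, (i : ℕ) < m → a i ≤ 0)
    (hpos : ∀ i : Fin p, m ≤ (i : ℕ) → 0 < a i)
    (lam : Fin (p+1) → ℕ) (hlam : ∑ i, lam i = d)
    (hlamzero : ∀ i : Fin p, m ≤ (i : ℕ) → lam i.castSucc = 0)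
    (hlamn : lam (Fin.last p) < d)
    (j : Fin p) (hj : m ≤ (j : ℕ)) (k : Fin p)
    (η : Fin (p+1) → ℕ)
    (hη : η = fun i => if i = k.castSucc then lam i + lam (Fin.last p)
                       else if i = Fin.last p then 0 else lam i) :
    yv ^ ((d : ℤ) * a j) * mMono a lam η =
        (xv k * yv ^ (-(a k) : ℤ)) ^ lam (Fin.last p) *
          yv ^ (-(aDot a lam) - (lam (Fin.last p) : ℤ) + (d : ℤ) * a j) ∧
      yv ^ ((d : ℤ) * a j) * mMono a lam η ∉ Asub a := by
  classical
  have hy := yv_ne_zero (p := p)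
  set L := lam (Fin.last p) with hLdef
  have hηc : ∀ i : Fin p, η i.castSucc
      = if i = k then lam i.castSucc + L else lam i.castSucc := by
    intro i
    simp only [hη, Fin.castSucc_inj, (Fin.castSucc_lt_last i).ne, if_false]
  have hηlast : η (Fin.last p) = 0 := by
    simp only [hη, (Fin.castSucc_lt_last k).ne', if_false, if_true]
  have hprod : (∏ i : Fin p, xv i ^ (η i.castSucc - lam i.castSucc)) = xv k ^ L := by
    have h1 : ∀ i : Fin p, xv i ^ (η i.castSucc - lam i.castSucc)
        = if i = k then xv k ^ L else 1 := by
      intro i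
      rw [hηc i]
      split
      · next h => subst h; rw [Nat.add_sub_cancel_left]
      · rw [Nat.sub_self, pow_zero]
    rw [Finset.prod_congr rfl (fun i _ => h1 i), Finset.prod_ite_eq' Finset.univ k,
      if_pos (Finset.mem_univ k)]
  have haDot : aDot a η = aDot a lam + a k * L := by
    unfold aDot
    have h1 : ∀ i : Fin p, (a i * (η i.castSucc : ℤ))
        = a i * lam i.castSucc + (if i = k then a k * L else 0) := by
      intro i
      rw [hηc i]
      split
      · next h => subst h; push_cast; ring
      · rw [add_zero]
    rw [Finset.sum_congr rfl (fun i _ => h1 i), Finset.sum_add_distrib,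
      Finset.sum_ite_eq' Finset.univ k, if_pos (Finset.mem_univ k)]
  set w : ℤ := -(aDot a lam) - L + d * a j + (-(a k)) * L with hw
  have hzL : yv ^ ((d : ℤ) * a j) * mMono a lam η = xv k ^ L * yv ^ w := by
    simp only [mMono, hprod, haDot, hηlast]
    rw [mul_comm (yv ^ ((d:ℤ) * a j)), mul_assoc, ← zpow_add₀ hy]
    congr 1
    congr 1
    rw [hw, ← hLdef]
    push_cast
    ring
  have hzR : (xv k * yv ^ (-(a k) : ℤ)) ^ L
      * yv ^ (-(aDot a lam) - (L : ℤ) + (d : ℤ) * a j) = xv k ^ L * yv ^ w := by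
    rw [mul_pow, ← zpow_natCast (yv ^ (-(a k) : ℤ)), ← zpow_mul, mul_assoc, ← zpow_add₀ hy]
    congr 1
    congr 1
    rw [hw]
    ring
  refine ⟨hzL.trans hzR.symm, ?_⟩
  intro hmem
  obtain ⟨N, f, hf, hsup⟩ := Asub_le_goodA a hmem
  rw [hzL] at hf
  set M := (-((N:ℤ) + w)).toNat with hM
  have hE : (0:ℤ) ≤ (N:ℤ) + M + w := by
    rw [hM]
    have := Int.self_le_toNat (-((N:ℤ) + w))
    linarith
  set E := ((N:ℤ) + M + w).toNat with hEdef
  have hE' : (E:ℤ) = (N:ℤ) + M + w := Int.toNat_of_nonneg hE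
  have hxk : algebraMap (MvPolynomial (Fin (p+1)) ℂ) (Kk p)
      (monomial (Finsupp.single k.castSucc L) 1) = xv k ^ L := by
    rw [← MvPolynomial.X_pow_eq_monomial, map_pow]; rfl
  have hc : ∀ (u : Kk p) (α β γ : ℤ), yv ^ α * (yv ^ β * (u * yv ^ γ)) = u * yv ^ (α + β + γ) := by
    intro u α β γ
    rw [zpow_add₀ hy, zpow_add₀ hy]
    ring
  have hmain : algebraMap (MvPolynomial (Fin (p+1)) ℂ) (Kk p)
      (monomial (Finsupp.single (Fin.last p) M) 1 * f)
      = algebraMap (MvPolynomial (Fin (p+1)) ℂ) (Kk p)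
        (monomial (Finsupp.single k.castSucc L + Finsupp.single (Fin.last p) E) 1) := by
    rw [RingHom.map_mul, algebraMap_monomial_last, ← hf,
      show (monomial (Finsupp.single k.castSucc L + Finsupp.single (Fin.last p) E) (1:ℂ))
          = monomial (Finsupp.single k.castSucc L) 1 * monomial (Finsupp.single (Fin.last p) E) 1
        by rw [MvPolynomial.monomial_mul, one_mul],
      RingHom.map_mul, algebraMap_monomial_last, hxk,
      show ((yv : Kk p) ^ M) = yv ^ ((M:ℕ) : ℤ) from (zpow_natCast _ _).symm,
      show ((yv : Kk p) ^ N) = yv ^ ((N:ℕ) : ℤ) from (zpow_natCast _ _).symm,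
      show ((yv : Kk p) ^ E) = yv ^ ((E:ℕ) : ℤ) from (zpow_natCast _ _).symm,
      hc]
    exact congrArg (fun t : ℤ => xv k ^ L * yv ^ t)
      (show ((M:ℤ)) + ((N:ℤ)) + w = ((E:ℤ)) by linarith [hE'])
  have hfeq := IsFractionRing.injective (MvPolynomial (Fin (p+1)) ℂ) (Kk p) hmain
  have hσmem : (Finsupp.single k.castSucc L + Finsupp.single (Fin.last p) E)
      ∈ (monomial (Finsupp.single (Fin.last p) M) (1:ℂ) * f).support := by
    rw [hfeq, MvPolynomial.support_monomial, if_neg one_ne_zero]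
    exact Finset.mem_singleton_self _
  obtain ⟨τ₁, ht₁, τ₂, ht₂, hsum⟩ := Finset.mem_add.mp (MvPolynomial.support_mul _ _ hσmem)
  rw [MvPolynomial.support_monomial, if_neg one_ne_zero, Finset.mem_singleton] at ht₁
  subst ht₁
  have h2 := hsup _ ht₂
  have h3 : wdeg a (Finsupp.single (Fin.last p) M + τ₂) = (E:ℤ) + a k * L := by
    rw [hsum, wdeg_single_single]
  rw [wdeg_add, wdeg_single_last] at h3
  have haDotle : aDot a lam ≤ 0 := by
    apply Finset.sum_nonpos
    intro i _
    by_cases hmi : m ≤ (i:ℕ)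
    · rw [hlamzero i hmi]
      simp
    · exact mul_nonpos_of_nonpos_of_nonneg (hnonpos i (by omega)) (by positivity)
  have h1aj : 1 ≤ a j := hpos j hj
  have hdaj : (d:ℤ) ≤ (d:ℤ) * a j := le_mul_of_one_le_right (by positivity) h1aj
  have hLd : (L:ℤ) < d := by exact_mod_cast hlamn
  linarith [h2, h3, hE', haDotle, hdaj, hLd]


end
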